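/- arXiv:1106.3838 — 3 statements merged into one kernel-verified Lean document; each statement's English description precedes it below -/
import Mathlib

section
/- Let c be a positive integer and let k₁,…,k_c and r₁,…,r_c be positive integers with k = Σᵢ kᵢ and r = Σᵢ rᵢ. Then for every graph G, σ(G, r, k − c + 1) ≤ Σᵢ σ(G, rᵢ, kᵢ). -/
/-- One simultaneous move in the game: each agent stays put or moves along an edge. -/
def RSMove {V : Type*} (G : SimpleGraph V) {ι : Type*} (p q : ι → V) : Prop :=
  ∀ i, q i = p i ∨ G.Adj (p i) (q i)

/-- The spies have a winning strategy in 𝒢(G,r,s,k): there is a causal function `f`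
(depending only on the history so far) producing the spies' positions at the end of each
round from the revolutionaries' positions up to that round (the revolutionaries
place/move first in each round), such that against every legal play of the
revolutionaries the spies' play is legal and, at the end of every round, each vertex
holding at least `k` revolutionaries is occupied by a spy. -/
def SpiesWin {V : Type*} (G : SimpleGraph V) (r s k : ℕ) : Prop :=
  ∃ f : (ℕ → Fin r → V) → ℕ → Fin s → V,
    (∀ R R' n, (∀ m, m ≤ n → R m = R' m) → f R n = f R' n) ∧
    ∀ R : ℕ → Fin r → V, (∀ n, RSMove G (R n) (R (n + 1))) →
      (∀ n, RSMove G (f R n) (f R (n + 1))) ∧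
      (∀ n v, k ≤ Set.ncard {i | R n i = v} → ∃ j, f R n j = v)

/-- σ(G, r, k): the minimum number of spies needed to win 𝒢(G,r,s,k). -/
noncomputable def spySigma {V : Type*} (G : SimpleGraph V) (r k : ℕ) : ℕ :=
  sInf {s | SpiesWin G r s k}

/-- With `r` spies (one shadowing each revolutionary), the spies win whenever `k ≥ 1`. -/
lemma spiesWin_shadow {V : Type*} (G : SimpleGraph V) (r k : ℕ) (hk : 0 < k) :
    SpiesWin G r r k := by
  refine ⟨fun R n j => R n j, ?_, ?_⟩
  · intro R R' n h
    funext j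
    show R n j = R' n j
    rw [h n le_rfl]
  · intro R hR
    refine ⟨fun n j => hR n j, ?_⟩
    intro n v hv
    have hne : {i | R n i = v}.Nonempty :=
      (Set.ncard_pos (Set.toFinite _)).mp (lt_of_lt_of_le hk hv)
    obtain ⟨i, hi⟩ := hne
    exact ⟨i, hi⟩

/-- Counting a fiber over `Fin N` via an equivalence with a sigma type. -/
lemma ncard_decomp {V : Type*} {c : ℕ} (r : Fin c → ℕ)
    (e : (Σ i : Fin c, Fin (r i)) ≃ Fin (∑ i, r i)) (R : Fin (∑ i, r i) → V) (v : V) :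
    Set.ncard {i | R i = v} = ∑ i, Set.ncard {z : Fin (r i) | R (e ⟨i, z⟩) = v} := by
  classical
  have h1 : ∀ (N : ℕ) (P : Fin N → Prop),
      Set.ncard {x | P x} = Nat.card {x : Fin N // P x} := by
    intro N P
    rw [← Nat.card_coe_set_eq]
    rfl
  rw [h1]
  have e2 : {x : Fin (∑ i, r i) // R x = v} ≃ Σ i : Fin c, {z : Fin (r i) // R (e ⟨i, z⟩) = v} :=
    { toFun := fun x => ⟨(e.symm x.1).1, ⟨(e.symm x.1).2, by
        have : e ⟨(e.symm x.1).1, (e.symm x.1).2⟩ = x.1 := by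
          simp
        rw [this]; exact x.2⟩⟩
      invFun := fun y => ⟨e ⟨y.1, y.2.1⟩, y.2.2⟩
      left_inv := fun x => by
        apply Subtype.ext
        simp
      right_inv := fun y => by
        obtain ⟨i, z, hz⟩ := y
        have h := e.symm_apply_apply ⟨i, z⟩
        refine Sigma.ext ?_ ?_
        · simpa using congrArg Sigma.fst h
        · apply Subtype.heq_iff_coe_heq ?_ ?_ |>.mpr
          · simpa using (Sigma.mk.inj_iff.mp h).2
          · rw [show (e.symm (e ⟨i, z⟩)).1 = i from congrArg Sigma.fst h]
          · rw [show (e.symm (e ⟨i, z⟩)).1 = i from congrArg Sigma.fst h] }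
  rw [Nat.card_congr e2, Nat.card_eq_fintype_card, Fintype.card_sigma]
  congr 1
  funext i
  rw [h1]
  exact (Nat.card_eq_fintype_card).symm

/-- Combining winning strategies for the groups. -/
lemma spiesWin_combine {V : Type*} (G : SimpleGraph V) (c : ℕ)
    (k r s : Fin c → ℕ) (hk : ∀ i, 0 < k i)
    (h : ∀ i, SpiesWin G (r i) (s i) (k i)) :
    SpiesWin G (∑ i, r i) (∑ i, s i) (∑ i, k i - c + 1) := by
  classical
  choose f hcausal hgood using h
  have her : Fintype.card (Σ i : Fin c, Fin (r i)) = ∑ i, r i := by simp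
  have hes : Fintype.card (Σ i : Fin c, Fin (s i)) = ∑ i, s i := by simp
  let er : (Σ i : Fin c, Fin (r i)) ≃ Fin (∑ i, r i) := Fintype.equivFinOfCardEq her
  let es : (Σ i : Fin c, Fin (s i)) ≃ Fin (∑ i, s i) := Fintype.equivFinOfCardEq hes
  -- restriction of a global revolutionary play to group i
  let res : (ℕ → Fin (∑ i, r i) → V) → (i : Fin c) → (ℕ → Fin (r i) → V) :=
    fun R i n z => R n (er ⟨i, z⟩)
  refine ⟨fun R n j => f (es.symm j).1 (res R (es.symm j).1) n (es.symm j).2, ?_, ?_⟩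
  · intro R R' n hRR'
    funext j
    exact congrFun (hcausal (es.symm j).1 _ _ n (fun m hm => by
      funext z
      show R m _ = R' m _
      rw [hRR' m hm])) (es.symm j).2
  · intro R hR
    have hres : ∀ i, ∀ n, RSMove G (res R i n) (res R i (n + 1)) := by
      intro i n z
      exact hR n (er ⟨i, z⟩)
    constructor
    · intro n j
      exact (hgood (es.symm j).1 (res R (es.symm j).1) (hres _)).1 n (es.symm j).2
    · intro n v hv
      -- pigeonhole: some group i has at least k i revolutionaries at v
      have hdec := ncard_decomp r er (R n) v
      have hex : ∃ i, k i ≤ Set.ncard {z : Fin (r i) | res R i n z = v} := by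
        by_contra hcon
        push_neg at hcon
        have hle : ∀ i ∈ Finset.univ, Set.ncard {z : Fin (r i) | res R i n z = v} + 1 ≤ k i :=
          fun i _ => hcon i
        have hsum : (∑ i, Set.ncard {z : Fin (r i) | res R i n z = v}) + c ≤ ∑ i, k i := by
          calc (∑ i, Set.ncard {z : Fin (r i) | res R i n z = v}) + c
              = ∑ i, (Set.ncard {z : Fin (r i) | res R i n z = v} + 1) := by
                rw [Finset.sum_add_distrib]; simp
            _ ≤ ∑ i, k i := Finset.sum_le_sum hle
        have hck : c ≤ ∑ i, k i := by
          calc c = ∑ _i : Fin c, 1 := by simp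
            _ ≤ ∑ i, k i := Finset.sum_le_sum (fun i _ => hk i)
        have : Set.ncard {i | R n i = v} = ∑ i, Set.ncard {z : Fin (r i) | res R i n z = v} :=
          hdec
        omega
      obtain ⟨i, hi⟩ := hex
      obtain ⟨j, hj⟩ := (hgood i (res R i) (hres i)).2 n v hi
      refine ⟨es ⟨i, j⟩, ?_⟩
      show f (es.symm (es ⟨i, j⟩)).1 (res R (es.symm (es ⟨i, j⟩)).1) n (es.symm (es ⟨i, j⟩)).2 = v
      rw [es.symm_apply_apply]
      exact hj

theorem stmt_5 {V : Type*} (G : SimpleGraph V) (c : ℕ) (hc : 0 < c)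
    (k r : Fin c → ℕ) (hk : ∀ i, 0 < k i) (hr : ∀ i, 0 < r i) :
    spySigma G (∑ i, r i) (∑ i, k i - c + 1) ≤ ∑ i, spySigma G (r i) (k i) := by
  have hwin : ∀ i, SpiesWin G (r i) (spySigma G (r i) (k i)) (k i) := by
    intro i
    have hne : {s | SpiesWin G (r i) s (k i)}.Nonempty :=
      ⟨r i, spiesWin_shadow G (r i) (k i) (hk i)⟩
    exact Nat.sInf_mem hne
  exact Nat.sInf_le (spiesWin_combine G c k r _ hk hwin)
end

section
/- If r and k are positive integers, then σ(ℤ, r, k) = ⌊r/k⌋, where ℤ denotes the graph on vertex set ℤ with an edge between i and i+1 for every integer i. -/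
/-- The graph on ℤ with edges {i, i+1}. -/
def intPathGraph : SimpleGraph ℤ where
  Adj a b := |a - b| = 1
  symm := by constructor; intro a b h; rwa [abs_sub_comm] at h
  loopless := by constructor; intro a h; simp at h

/-- number of coordinates of `p` that are `≤ v` -/
def rsCnt {r : ℕ} (p : Fin r → ℤ) (v : ℤ) : ℕ :=
  (Finset.univ.filter (fun i => p i ≤ v)).card

/-- the `j`-th smallest value among the `p i` (1-indexed). -/
noncomputable def rsOrd {r : ℕ} (j : ℕ) (p : Fin r → ℤ) : ℤ :=
  sInf {v : ℤ | j ≤ rsCnt p v}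

lemma rsCnt_mono {r : ℕ} (p : Fin r → ℤ) {v w : ℤ} (h : v ≤ w) :
    rsCnt p v ≤ rsCnt p w := by
  apply Finset.card_le_card
  intro i hi
  simp only [Finset.mem_filter] at *
  exact ⟨hi.1, hi.2.trans h⟩

lemma rsCnt_le {r : ℕ} (p : Fin r → ℤ) (v : ℤ) : rsCnt p v ≤ r := by
  simpa [rsCnt] using Finset.card_filter_le Finset.univ (fun i => p i ≤ v)

lemma rsSet_nonempty {r j : ℕ} (p : Fin r → ℤ) (hj : 1 ≤ j) (hjr : j ≤ r) :
    {v : ℤ | j ≤ rsCnt p v}.Nonempty := by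
  have hr : 0 < r := lt_of_lt_of_le hj hjr
  have hne : (Finset.univ : Finset (Fin r)).Nonempty := by
    simp [Finset.univ_nonempty_iff, Fin.pos_iff_nonempty.mp hr]
  refine ⟨Finset.univ.sup' hne p, ?_⟩
  have : Finset.univ.filter (fun i => p i ≤ Finset.univ.sup' hne p) = Finset.univ := by
    apply Finset.filter_true_of_mem
    intro i _
    exact Finset.le_sup' p (Finset.mem_univ i)
  show j ≤ rsCnt p _
  rw [rsCnt, this, Finset.card_univ, Fintype.card_fin]
  exact hjr

lemma rsSet_bddBelow {r j : ℕ} (p : Fin r → ℤ) (hj : 1 ≤ j) :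
    BddBelow {v : ℤ | j ≤ rsCnt p v} := by
  rcases Nat.eq_zero_or_pos r with hr | hr
  · subst hr
    have : {v : ℤ | j ≤ rsCnt p v} = ∅ := by
      ext v; simp [rsCnt]; omega
    simp [this]
  have hne : (Finset.univ : Finset (Fin r)).Nonempty := by
    simp [Finset.univ_nonempty_iff, Fin.pos_iff_nonempty.mp hr]
  refine ⟨Finset.univ.inf' hne p, ?_⟩
  intro v hv
  have : (Finset.univ.filter (fun i => p i ≤ v)).Nonempty := by
    rw [← Finset.card_pos]
    exact lt_of_lt_of_le hj hv
  obtain ⟨i, hi⟩ := this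
  simp only [Finset.mem_filter] at hi
  exact le_trans (Finset.inf'_le p (Finset.mem_univ i)) hi.2

lemma rsOrd_spec {r j : ℕ} (p : Fin r → ℤ) (hj : 1 ≤ j) (hjr : j ≤ r) :
    j ≤ rsCnt p (rsOrd j p) :=
  Int.csInf_mem (rsSet_nonempty p hj hjr) (rsSet_bddBelow p hj)

lemma rsOrd_le {r j : ℕ} (p : Fin r → ℤ) (hj : 1 ≤ j) {v : ℤ} (h : j ≤ rsCnt p v) :
    rsOrd j p ≤ v :=
  csInf_le (rsSet_bddBelow p hj) h

lemma le_rsCnt_of_rsOrd_le {r j : ℕ} (p : Fin r → ℤ) (hj : 1 ≤ j) (hjr : j ≤ r)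
    {v : ℤ} (h : rsOrd j p ≤ v) : j ≤ rsCnt p v :=
  le_trans (rsOrd_spec p hj hjr) (rsCnt_mono p h)

/-- 1-Lipschitz (one direction). -/
lemma rsOrd_lipschitz {r j : ℕ} (p q : Fin r → ℤ) (hj : 1 ≤ j) (hjr : j ≤ r)
    (h : ∀ i, |p i - q i| ≤ 1) : rsOrd j q ≤ rsOrd j p + 1 := by
  apply rsOrd_le q hj
  refine le_trans (rsOrd_spec p hj hjr) ?_
  apply Finset.card_le_card
  intro i hi
  simp only [Finset.mem_filter, Finset.mem_univ, true_and] at *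
  have := h i
  have := abs_le.mp this
  omega

lemma rsCnt_split {r : ℕ} (p : Fin r → ℤ) (v : ℤ) :
    rsCnt p v = rsCnt p (v - 1) + (Finset.univ.filter (fun i => p i = v)).card := by
  unfold rsCnt
  rw [← Finset.card_union_of_disjoint]
  · congr 1
    ext i
    simp only [Finset.mem_filter, Finset.mem_union, Finset.mem_univ, true_and]
    omega
  · rw [Finset.disjoint_filter]
    intro i _ h1 h2
    omega

lemma rsOrd_meeting {r k : ℕ} (p : Fin r → ℤ) (hk : 0 < k) {v : ℤ}
    (h : k ≤ (Finset.univ.filter (fun i => p i = v)).card) :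
    ∃ t : ℕ, t < r / k ∧ rsOrd ((t + 1) * k) p = v := by
  set a := rsCnt p (v - 1) with ha
  have hm' : (a / k + 1) * k = k * (a / k) + k := by ring
  have hdm := Nat.div_add_mod a k
  have hmod := Nat.mod_lt a hk
  have ham : a < (a / k + 1) * k := by omega
  have hmb : (a / k + 1) * k ≤ a + k := by omega
  have hb : a + k ≤ rsCnt p v := by rw [rsCnt_split p v]; omega
  have hm1 : 1 ≤ (a / k + 1) * k := by omega
  have hmr : (a / k + 1) * k ≤ r := le_trans (le_trans hmb hb) (rsCnt_le p v)
  have hle : rsOrd ((a / k + 1) * k) p ≤ v := rsOrd_le p hm1 (le_trans hmb hb)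
  have hgt : ¬ rsOrd ((a / k + 1) * k) p ≤ v - 1 := by
    intro hc
    have := le_rsCnt_of_rsOrd_le p hm1 hmr hc
    omega
  refine ⟨a / k, ?_, ?_⟩
  · have : a / k + 1 ≤ r / k := by
      rw [Nat.le_div_iff_mul_le hk]
      exact hmr
    omega
  · exact le_antisymm hle (by omega)

lemma rsMove_abs {r : ℕ} {p q : Fin r → ℤ} (h : RSMove intPathGraph p q) (i : Fin r) :
    |p i - q i| ≤ 1 := by
  rcases h i with h' | h'
  · simp [h']
  · exact le_of_eq h'

/-- the spies win with r / k spies -/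
lemma spiesWin_upper (r k : ℕ) (hk : 0 < k) : SpiesWin intPathGraph r (r / k) k := by
  refine ⟨fun R n t => rsOrd ((t.1 + 1) * k) (R n), ?_, ?_⟩
  · intro R R' n h
    have := h n le_rfl
    simp [this]
  · intro R hR
    constructor
    · intro n t
      set m := (t.1 + 1) * k with hmdef
      have hm1 : 1 ≤ m := by
        have := t.2
        have : 0 < (t.1 + 1) * k := Nat.mul_pos (Nat.succ_pos _) hk
        omega
      have hmr : m ≤ r := by
        have h1 : t.1 + 1 ≤ r / k := t.2
        calc m ≤ (r / k) * k := Nat.mul_le_mul_right k h1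
        _ ≤ r := Nat.div_mul_le_self r k
      have h1 : rsOrd m (R (n + 1)) ≤ rsOrd m (R n) + 1 :=
        rsOrd_lipschitz _ _ hm1 hmr (rsMove_abs (hR n))
      have h2 : rsOrd m (R n) ≤ rsOrd m (R (n + 1)) + 1 := by
        apply rsOrd_lipschitz _ _ hm1 hmr
        intro i
        rw [abs_sub_comm]
        exact rsMove_abs (hR n) i
      set x := rsOrd m (R n)
      set y := rsOrd m (R (n + 1))
      rcases eq_or_ne y x with he | hne
      · exact Or.inl he
      · right
        show |x - y| = 1
        have : x - y = 1 ∨ x - y = -1 := by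
          have : x ≠ y := fun h => hne h.symm
          omega
        rcases this with h | h <;> simp [h]
    · intro n v hv
      have hcard : k ≤ (Finset.univ.filter (fun i => R n i = v)).card := by
        have : {i | R n i = v}.ncard = (Finset.univ.filter (fun i => R n i = v)).card := by
          rw [Set.ncard_eq_toFinset_card']
          congr 1
          ext i
          simp
        omega
      obtain ⟨t, ht, hord⟩ := rsOrd_meeting (R n) hk hcard
      exact ⟨⟨t, ht⟩, hord⟩

/-- with fewer than r / k spies, the spies lose -/
lemma spiesWin_lower (r s k : ℕ) (hk : 0 < k) (hs : s < r / k) :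
    ¬ SpiesWin intPathGraph r s k := by
  rintro ⟨f, _, hf⟩
  set R : ℕ → Fin r → ℤ := fun _ i => ((i.1 / k : ℕ) : ℤ) with hR
  have hRmove : ∀ n, RSMove intPathGraph (R n) (R (n + 1)) := fun n i => Or.inl rfl
  obtain ⟨-, hcov⟩ := hf R hRmove
  have key : ∀ t : Fin (r / k), ∃ j : Fin s, f R 0 j = ((t.1 : ℕ) : ℤ) := by
    intro t
    apply hcov 0
    have hb : (t.1 + 1) * k ≤ r := by
      rw [← Nat.le_div_iff_mul_le hk]
      exact t.2
    have hmem : ∀ a : Fin k, k * t.1 + a.1 < r := by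
      intro a
      have := a.2
      have : k * t.1 + a.1 < (t.1 + 1) * k := by
        have : (t.1 + 1) * k = k * t.1 + k := by ring
        omega
      omega
    have hmaps : Set.MapsTo (fun a : Fin k => (⟨k * t.1 + a.1, hmem a⟩ : Fin r))
        Set.univ {i | R 0 i = ((t.1 : ℕ) : ℤ)} := by
      intro a _
      show ((((k * t.1 + a.1) / k : ℕ)) : ℤ) = ((t.1 : ℕ) : ℤ)
      congr 1
      rw [Nat.mul_add_div hk]
      simp [Nat.div_eq_of_lt a.2]
    have hinj : Set.InjOn (fun a : Fin k => (⟨k * t.1 + a.1, hmem a⟩ : Fin r))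
        Set.univ := by
      intro a _ b _ hab
      have : k * t.1 + a.1 = k * t.1 + b.1 := congrArg Fin.val hab
      exact Fin.ext (by omega)
    have := Set.ncard_le_ncard_of_injOn _ hmaps hinj (Set.toFinite _)
    simpa [Set.ncard_univ] using this
  choose g hg using key
  have hginj : Function.Injective g := by
    intro t t' h
    have h2 : ((t.1 : ℕ) : ℤ) = ((t'.1 : ℕ) : ℤ) := by
      rw [← hg t, ← hg t', h]
    exact Fin.ext (by exact_mod_cast h2)
  have hle := Fintype.card_le_of_injective g hginj
  simp only [Fintype.card_fin] at hle
  omega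

theorem stmt_12 (r k : ℕ) (hr : 0 < r) (hk : 0 < k) :
    spySigma intPathGraph r k = r / k := by
  have hmem : r / k ∈ {s | SpiesWin intPathGraph r s k} := spiesWin_upper r k hk
  refine le_antisymm (Nat.sInf_le hmem) ?_
  by_contra h
  push_neg at h
  have hm := Nat.sInf_mem ⟨_, hmem⟩
  exact spiesWin_lower r _ k hk h hm
end

section
/- If d, r and k are positive integers with 1 ≤ k ≤ r/2, then σ(ℤ^⊠d, r, k) ≤ r − 2k + 2, where ℤ^⊠d is the d-fold strong product of the graph ℤ with itself. -/
open Finset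

section aux

/-- Indices of the last `2k-1` revolutionaries. -/
def medA (r k : ℕ) : Finset (Fin r) := Finset.univ.filter (fun i => r - 2*k + 1 ≤ (i:ℕ))

/-- The `k`-th smallest value of `g` over `medA r k`. -/
noncomputable def kth (r k : ℕ) (g : Fin r → ℤ) : ℤ :=
  sInf {z : ℤ | k ≤ ((medA r k).filter (fun i => g i ≤ z)).card}

variable {r k : ℕ}

lemma medA_card (hk : 1 ≤ k) (hkr : 2*k ≤ r) : (medA r k).card = 2*k - 1 := by
  have h1 : r - 2*k + 1 < r := by omega
  have : medA r k = Finset.Ici (⟨r - 2*k + 1, h1⟩ : Fin r) := by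
    ext i
    simp [medA, Fin.le_def]
  rw [this, Fin.card_Ici]
  simp only [Fin.val_mk]
  omega

lemma medA_nonempty (hk : 1 ≤ k) (hkr : 2*k ≤ r) : (medA r k).Nonempty := by
  rw [← Finset.card_pos, medA_card hk hkr]; omega

lemma kth_bddBelow (hk : 1 ≤ k) (hkr : 2*k ≤ r) (g : Fin r → ℤ) :
    BddBelow {z : ℤ | k ≤ ((medA r k).filter (fun i => g i ≤ z)).card} := by
  refine ⟨(medA r k).inf' (medA_nonempty hk hkr) g, fun z hz => ?_⟩
  have hpos : 0 < ((medA r k).filter (fun i => g i ≤ z)).card := lt_of_lt_of_le (by omega) hz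
  obtain ⟨i, hi⟩ := Finset.card_pos.1 hpos
  rw [Finset.mem_filter] at hi
  exact le_trans (Finset.inf'_le g hi.1) hi.2

lemma kth_setNonempty (hk : 1 ≤ k) (hkr : 2*k ≤ r) (g : Fin r → ℤ) :
    Set.Nonempty {z : ℤ | k ≤ ((medA r k).filter (fun i => g i ≤ z)).card} := by
  refine ⟨(medA r k).sup' (medA_nonempty hk hkr) g, ?_⟩
  have : (medA r k).filter (fun i => g i ≤ (medA r k).sup' (medA_nonempty hk hkr) g) = medA r k :=
    Finset.filter_true_of_mem (fun i hi => Finset.le_sup' g hi)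
  simp only [Set.mem_setOf_eq, this, medA_card hk hkr]
  omega

lemma kth_le (hk : 1 ≤ k) (hkr : 2*k ≤ r) (g : Fin r → ℤ) {z : ℤ}
    (hz : k ≤ ((medA r k).filter (fun i => g i ≤ z)).card) : kth r k g ≤ z :=
  csInf_le (kth_bddBelow hk hkr g) hz

lemma kth_mem (hk : 1 ≤ k) (hkr : 2*k ≤ r) (g : Fin r → ℤ) :
    k ≤ ((medA r k).filter (fun i => g i ≤ kth r k g)).card :=
  Int.csInf_mem (kth_setNonempty hk hkr g) (kth_bddBelow hk hkr g)

lemma kth_lip (hk : 1 ≤ k) (hkr : 2*k ≤ r) (g g' : Fin r → ℤ)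
    (h : ∀ i, g' i ≤ g i + 1) : kth r k g' ≤ kth r k g + 1 := by
  apply kth_le hk hkr
  refine le_trans (kth_mem hk hkr g) (Finset.card_le_card ?_)
  intro i hi
  rw [Finset.mem_filter] at hi ⊢
  exact ⟨hi.1, le_trans (h i) (by omega)⟩

lemma kth_eq (hk : 1 ≤ k) (hkr : 2*k ≤ r) (g : Fin r → ℤ) (v : ℤ) (T : Finset (Fin r))
    (hT : T ⊆ medA r k) (hTc : k ≤ T.card) (hTv : ∀ i ∈ T, g i = v) : kth r k g = v := by
  have hle : kth r k g ≤ v := by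
    apply kth_le hk hkr
    refine le_trans hTc (Finset.card_le_card ?_)
    intro i hi
    rw [Finset.mem_filter]
    exact ⟨hT hi, le_of_eq (hTv i hi)⟩
  refine le_antisymm hle (le_of_not_gt fun hlt => ?_)
  have hsub : (medA r k).filter (fun i => g i ≤ kth r k g) ⊆ medA r k \ T := by
    intro i hi
    rw [Finset.mem_filter] at hi
    rw [Finset.mem_sdiff]
    refine ⟨hi.1, fun hiT => ?_⟩
    have := hTv i hiT
    omega
  have := Finset.card_le_card hsub
  rw [Finset.card_sdiff_of_subset hT, medA_card hk hkr] at this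
  have := kth_mem hk hkr g
  omega

/-- The spy strategy. -/
noncomputable def spyStrat (d r k : ℕ) (R : ℕ → Fin r → (Fin d → ℤ)) (n : ℕ)
    (j : Fin (r - 2*k + 2)) : Fin d → ℤ :=
  if h : (j : ℕ) < min (r - 2*k + 1) r then R n ⟨j, by omega⟩
  else fun c => kth r k (fun i => R n i c)

end aux
/-- The d-fold strong product ℤ^⊠d: vertices are ℤ^d, and distinct vertices are adjacent
iff they differ by at most 1 in every coordinate. -/
def intGridGraph (d : ℕ) : SimpleGraph (Fin d → ℤ) where
  Adj a b := a ≠ b ∧ ∀ i, |a i - b i| ≤ 1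
  symm := by
    constructor
    intro a b h
    exact ⟨h.1.symm, fun i => by rw [abs_sub_comm]; exact h.2 i⟩
  loopless := by constructor; intro a h; exact h.1 rfl

theorem stmt_15 (d r k : ℕ) (hd : 0 < d) (hk : 1 ≤ k) (hkr : 2 * k ≤ r) :
    spySigma (intGridGraph d) r k ≤ r - 2 * k + 2 := by

  have hs : r - 2*k + 1 < r - 2*k + 2 := by omega
  have hmin : min (r - 2*k + 1) r = r - 2*k + 1 := by omega
  apply Nat.sInf_le
  show SpiesWin (intGridGraph d) r (r - 2*k + 2) k
  refine ⟨spyStrat d r k, ?_, ?_⟩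
  · intro R R' n h
    have hn : R n = R' n := h n le_rfl
    funext j
    unfold spyStrat
    split <;> simp [hn]
  · intro R hR
    constructor
    · -- spies move legally
      intro n j
      by_cases hj : (j : ℕ) < min (r - 2*k + 1) r
      · rw [spyStrat, spyStrat, dif_pos hj, dif_pos hj]
        exact hR n _
      · rw [spyStrat, spyStrat, dif_neg hj, dif_neg hj]
        set p : Fin d → ℤ := fun c => kth r k (fun i => R n i c) with hp
        set q : Fin d → ℤ := fun c => kth r k (fun i => R (n+1) i c) with hq
        by_cases hpq : q = p
        · exact Or.inl hpq
        · refine Or.inr ⟨fun e => hpq e.symm, fun c => ?_⟩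
          have hcoord : ∀ i : Fin r, |R n i c - R (n+1) i c| ≤ 1 := by
            intro i
            rcases hR n i with h1 | h1
            · rw [h1]; simp
            · exact h1.2 c
          have h1 : p c ≤ q c + 1 := by
            apply kth_lip hk hkr
            intro i
            have := abs_le.1 (hcoord i)
            omega
          have h2 : q c ≤ p c + 1 := by
            apply kth_lip hk hkr
            intro i
            have := abs_le.1 (hcoord i)
            omega
          rw [abs_le]
          omega
    · -- coverage
      intro n v hv
      classical
      set T : Finset (Fin r) := Finset.univ.filter (fun i => R n i = v) with hT
      have hTmem : ∀ i : Fin r, i ∈ T ↔ R n i = v := by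
        intro i; simp [hT]
      have hTcard : k ≤ T.card := by
        have : {i | R n i = v}.ncard = T.card := by
          rw [Set.ncard_eq_toFinset_card']
          congr 1
          ext i
          simp [hT]
        omega
      by_cases hcase : ∃ i ∈ T, (i : ℕ) < r - 2*k + 1
      · obtain ⟨i, hiT, hilt⟩ := hcase
        refine ⟨⟨(i : ℕ), by omega⟩, ?_⟩
        rw [spyStrat, dif_pos (show ((⟨(i:ℕ), by omega⟩ : Fin (r-2*k+2)) : ℕ) < min (r - 2*k + 1) r by
          simpa using by omega)]
        have : (⟨(i : ℕ), by omega⟩ : Fin r) = i := by ext; rfl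
        rw [this]
        exact (hTmem i).1 hiT
      · push_neg at hcase
        refine ⟨⟨r - 2*k + 1, hs⟩, ?_⟩
        rw [spyStrat, dif_neg (by simp)]
        funext c
        refine kth_eq hk hkr _ (v c) T ?_ hTcard ?_
        · intro i hiT
          simp only [medA, Finset.mem_filter, Finset.mem_univ, true_and]
          exact hcase i hiT
        · intro i hiT
          rw [(hTmem i).1 hiT]
end
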